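/- Let β ∈ (0, 1/2) with β ≠ 1/3, set c = cos(2πβ), let n ∈ ℕ, and let ω ∈ Ĩⁿ(β) with ω ≠ ωₙ*. Set u₀ = 1 + r_β(ω)·√(2 + 2c), v₀ = 3·cos(ωL), v₀' = (ω/sin(ωL))·(u₀ − v₀·cos(ωL)), and define φ : [0, 2L] → ℝ by φ(s) = v₀·cos(ω(L − s)) − (v₀'/(2ω))·sin(ω(L − s)) for s ∈ [0, L] and φ(s) = (1/sin(ωL))·(v₀·sin(ω(2L − s)) + u₀·sin(ω(s − L))) for s ∈ [L, 2L]. Then the set {t ∈ [0, 2L) : φ(t) = 0} has exactly 2n+1 elements. (These 2n+1 zeros are exactly the cut positions t for which λ = ω² is a Dirichlet edge-state eigenvalue of the zigzag-truncated hexagonal graph.) -/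

import Mathlib

open Real

/-- The edge length `L = 1/√3`. -/
noncomputable def L : ℝ := 1 / Real.sqrt 3

/-- The Dirac frequency `ωₙ* = (2n+1)π/(2L)`. -/
noncomputable def ωstar (n : ℕ) : ℝ := (2 * n + 1) * π / (2 * L)

/-- `g_β(ω) = (9·cos²(ωL) − 3 − 2·cos(2πβ)) / √(2 + 2·cos(2πβ))`. -/
noncomputable def g (β ω : ℝ) : ℝ :=
  (9 * Real.cos (ω * L) ^ 2 - 3 - 2 * Real.cos (2 * π * β)) /
    Real.sqrt (2 + 2 * Real.cos (2 * π * β))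

/-- `a(β) = arccos(√(3 + 2·cos(2πβ) − 2·√(2 + 2·cos(2πβ)))/3)`. -/
noncomputable def aβ (β : ℝ) : ℝ :=
  Real.arccos (Real.sqrt (3 + 2 * Real.cos (2 * π * β) -
    2 * Real.sqrt (2 + 2 * Real.cos (2 * π * β))) / 3)

/-- The open interval `Ĩⁿ(β) = (nπ/L + a(β)/L, (n+1)π/L − a(β)/L)`. -/
noncomputable def Itilde (β : ℝ) (n : ℕ) : Set ℝ :=
  Set.Ioo (n * π / L + aβ β / L) ((n + 1) * π / L - aβ β / L)

/-- `r_β(ω) = (g_β(ω) + √(g_β(ω)² − 4))/2`. -/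
noncomputable def r (β ω : ℝ) : ℝ := (g β ω + Real.sqrt (g β ω ^ 2 - 4)) / 2

/-- `u₀ = 1 + r_β(ω)·√(2 + 2·cos(2πβ))`. -/
noncomputable def u₀ (β ω : ℝ) : ℝ :=
  1 + r β ω * Real.sqrt (2 + 2 * Real.cos (2 * π * β))

/-- `v₀ = 3·cos(ωL)`. -/
noncomputable def v₀ (ω : ℝ) : ℝ := 3 * Real.cos (ω * L)

/-- `v₀' = (ω/sin(ωL))·(u₀ − v₀·cos(ωL))`. -/
noncomputable def v₀' (β ω : ℝ) : ℝ :=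
  (ω / Real.sin (ω * L)) * (u₀ β ω - v₀ ω * Real.cos (ω * L))

/-- The characteristic function `φ`:
`φ(s) = v₀·cos(ω(L − s)) − (v₀'/(2ω))·sin(ω(L − s))` on `[0, L]` and
`φ(s) = (1/sin(ωL))·(v₀·sin(ω(2L − s)) + u₀·sin(ω(s − L)))` on `[L, 2L]`. -/
noncomputable def φ (β ω : ℝ) (s : ℝ) : ℝ :=
  if s ≤ L then
    v₀ ω * Real.cos (ω * (L - s)) - (v₀' β ω / (2 * ω)) * Real.sin (ω * (L - s))
  else
    (1 / Real.sin (ω * L)) *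
      (v₀ ω * Real.sin (ω * (2 * L - s)) + u₀ β ω * Real.sin (ω * (s - L)))

/-- Zeros of `sin (ω t - δ)` in `Ioc 0 ℓ`. -/
lemma sin_zero_count (ω ℓ δ : ℝ) (hω : 0 < ω) (hδ0 : 0 < δ) (hδπ : δ < π)
    (m : ℕ) (h1 : ω * ℓ < δ + m * π) (h2 : δ + m * π ≤ ω * ℓ + π) :
    ({t ∈ Set.Ioc 0 ℓ | Real.sin (ω * t - δ) = 0}).Finite ∧
    ({t ∈ Set.Ioc 0 ℓ | Real.sin (ω * t - δ) = 0}).ncard = m := by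
  have hπ := Real.pi_pos
  have hinj : Function.Injective (fun k : ℕ => (δ + k * π) / ω) := by
    intro a b hab
    simp only at hab
    rw [div_eq_div_iff (ne_of_gt hω) (ne_of_gt hω)] at hab
    have h : (a:ℝ) * π = (b:ℝ) * π := by nlinarith
    have : (a:ℝ) = (b:ℝ) := mul_right_cancel₀ (ne_of_gt hπ) h
    exact_mod_cast this
  have hset : {t ∈ Set.Ioc 0 ℓ | Real.sin (ω * t - δ) = 0}
      = ↑((Finset.range m).image (fun k : ℕ => (δ + k * π) / ω)) := by
    ext t
    simp only [Finset.coe_image, Finset.coe_range, Set.mem_image, Set.mem_Iio,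
      Set.mem_setOf_eq, Set.mem_Ioc]
    constructor
    · rintro ⟨⟨ht0, htℓ⟩, hz⟩
      obtain ⟨j, hj⟩ := Real.sin_eq_zero_iff.mp hz
      have hωt : ω * t = δ + j * π := by linarith
      have hj0 : 0 ≤ j := by
        by_contra hneg
        push_neg at hneg
        have hj1' : j ≤ -1 := by omega
        have hj1 : (j:ℝ) ≤ -1 := by exact_mod_cast hj1'
        nlinarith [mul_pos hω ht0]
      have hjm : j < (m : ℤ) := by
        have hle : ω * t ≤ ω * ℓ := by nlinarith
        have : (j:ℝ) * π < (m:ℝ) * π := by linarith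
        exact_mod_cast lt_of_mul_lt_mul_right this (le_of_lt hπ)
      refine ⟨j.toNat, by omega, ?_⟩
      have hjt : ((j.toNat : ℕ) : ℝ) = (j : ℝ) := by exact_mod_cast congrArg Int.cast (Int.toNat_of_nonneg hj0)
      rw [hjt, eq_comm, eq_div_iff (ne_of_gt hω), mul_comm t ω]
      exact hωt
    · rintro ⟨k, hk, rfl⟩
      have hk1 : (k:ℝ) ≤ (m:ℝ) - 1 := by
        have : (k:ℝ) + 1 ≤ (m:ℝ) := by exact_mod_cast hk
        linarith
      have hval : ω * ((δ + k * π) / ω) = δ + k * π := by field_simp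
      refine ⟨⟨?_, ?_⟩, ?_⟩
      · apply div_pos _ hω
        positivity
      · rw [div_le_iff₀ hω]
        nlinarith
      · rw [hval]
        simpa using Real.sin_int_mul_pi (k : ℤ)
  constructor
  · rw [hset]; exact Finset.finite_toSet _
  · rw [hset, Set.ncard_coe_finset, Finset.card_image_of_injective _ hinj,
      Finset.card_range]

/-- Zero count of a sinusoid `A cos (ω t) + B sin (ω t)` on `Ioc 0 ℓ`,
    determined by endpoint signs. -/
lemma sinusoid_count (ω ℓ A B : ℝ) (n : ℕ) (ρ : ℝ) (hω : 0 < ω)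
    (hρ0 : 0 < ρ) (hρπ : ρ < π) (hωℓ : ω * ℓ = n * π + ρ) (hA : A ≠ 0) :
    ({t ∈ Set.Ioc 0 ℓ | A * Real.cos (ω * t) + B * Real.sin (ω * t) = 0}).Finite ∧
    (0 < (-1:ℝ)^(n+1) * (A * (A * Real.cos (ω * ℓ) + B * Real.sin (ω * ℓ))) →
      ({t ∈ Set.Ioc 0 ℓ | A * Real.cos (ω * t) + B * Real.sin (ω * t) = 0}).ncard = n + 1) ∧
    ((-1:ℝ)^(n+1) * (A * (A * Real.cos (ω * ℓ) + B * Real.sin (ω * ℓ))) < 0 →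
      ({t ∈ Set.Ioc 0 ℓ | A * Real.cos (ω * t) + B * Real.sin (ω * t) = 0}).ncard = n) := by
  have hπ := Real.pi_pos
  have hAB : 0 < A ^ 2 + B ^ 2 := by positivity
  set ρ₀ : ℝ := Real.sqrt (A ^ 2 + B ^ 2) with hρ₀def
  have hρ₀ : 0 < ρ₀ := Real.sqrt_pos.mpr hAB
  have hρ₀sq : ρ₀ ^ 2 = A ^ 2 + B ^ 2 := Real.sq_sqrt (le_of_lt hAB)
  set R : ℝ := if 0 < A then -ρ₀ else ρ₀ with hRdef
  have hR0 : R ≠ 0 := by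
    rw [hRdef]; split_ifs
    · exact ne_of_lt (neg_neg_iff_pos.mpr hρ₀)
    · exact ne_of_gt hρ₀
  have hRsq : R ^ 2 = A ^ 2 + B ^ 2 := by
    rw [hRdef]; split_ifs <;> [skip; skip] <;> rw [← hρ₀sq] <;> ring
  have hARneg : A / R < 0 := by
    rcases lt_trichotomy A 0 with h | h | h
    · rw [hRdef, if_neg (by linarith)]
      exact div_neg_of_neg_of_pos h hρ₀
    · exact absurd h hA
    · rw [hRdef, if_pos h]
      rw [div_neg_iff]
      exact Or.inl ⟨h, by linarith⟩
  have hBR : |B / R| ≤ 1 := by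
    rw [abs_div, div_le_one (by positivity : (0:ℝ) < |R|)]
    nlinarith [abs_nonneg B, sq_abs B, sq_abs R, abs_nonneg R]
  set δ : ℝ := Real.arccos (B / R) with hδdef
  have hcosδ : Real.cos δ = B / R :=
    Real.cos_arccos (by linarith [abs_le.mp hBR |>.1]) (by linarith [abs_le.mp hBR |>.2])
  have hsinδ : Real.sin δ = -(A / R) := by
    rw [hδdef, Real.sin_arccos]
    have h1 : 1 - (B / R) ^ 2 = (A / R) ^ 2 := by
      field_simp
      linarith [hRsq]
    rw [h1, Real.sqrt_sq_eq_abs, abs_of_nonpos (le_of_lt hARneg)]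
  have hsinδpos : 0 < Real.sin δ := by rw [hsinδ]; linarith
  have hδ0 : 0 < δ := by
    rcases lt_or_eq_of_le (Real.arccos_nonneg (B / R)) with h | h
    · exact h
    · exfalso; rw [hδdef, ← h] at hsinδpos; simp at hsinδpos
  have hδπ : δ < π := by
    rcases lt_or_eq_of_le (Real.arccos_le_pi (B / R)) with h | h
    · exact h
    · exfalso; rw [hδdef, h] at hsinδpos; simp at hsinδpos
  have hkey : ∀ x : ℝ, A * Real.cos x + B * Real.sin x = R * Real.sin (x - δ) := by
    intro x
    rw [Real.sin_sub, hcosδ, hsinδ]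
    field_simp
    ring
  have hsetEq : {t ∈ Set.Ioc 0 ℓ | A * Real.cos (ω * t) + B * Real.sin (ω * t) = 0}
      = {t ∈ Set.Ioc 0 ℓ | Real.sin (ω * t - δ) = 0} := by
    ext t
    simp only [Set.mem_setOf_eq, hkey (ω * t), mul_eq_zero]
    tauto
  -- endpoint sign value
  have hsin_end : Real.sin (ω * ℓ - δ) = (-1:ℝ)^n * Real.sin (ρ - δ) := by
    have : ω * ℓ - δ = (ρ - δ) + (n : ℤ) * π := by push_cast; linarith
    rw [this, Real.sin_add_int_mul_pi]
    norm_num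
  have hEval : (-1:ℝ)^(n+1) * (A * (A * Real.cos (ω * ℓ) + B * Real.sin (ω * ℓ)))
      = R ^ 2 * Real.sin δ * Real.sin (ρ - δ) := by
    have hA' : A = -(R * Real.sin δ) := by
      rw [hsinδ]; field_simp
    rw [hkey (ω * ℓ), hsin_end]
    rw [hA']
    have hodd : (-1:ℝ)^(n+1) * (-1:ℝ)^n = -1 := by
      rw [← pow_add]
      exact Odd.neg_one_pow ⟨n, by ring⟩
    linear_combination (-(R ^ 2 * Real.sin δ * Real.sin (ρ - δ))) * hodd
  have hR2 : 0 < R ^ 2 := by positivity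
  refine ⟨?_, ?_, ?_⟩
  · rw [hsetEq]
    rcases le_or_gt δ ρ with h | h
    · exact (sin_zero_count ω ℓ δ hω hδ0 hδπ (n+1)
        (by push_cast; linarith) (by push_cast; linarith)).1
    · exact (sin_zero_count ω ℓ δ hω hδ0 hδπ n
        (by push_cast; linarith) (by push_cast; linarith)).1
  · intro hE
    rw [hEval] at hE
    have hs : 0 < Real.sin (ρ - δ) := by
      nlinarith [mul_pos hR2 hsinδpos]
    have hδρ : δ < ρ := by
      by_contra h
      push_neg at h
      have h1 : 0 ≤ Real.sin (δ - ρ) :=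
        Real.sin_nonneg_of_nonneg_of_le_pi (by linarith) (by linarith)
      have h2 : Real.sin (ρ - δ) = -Real.sin (δ - ρ) := by
        rw [← Real.sin_neg]; ring_nf
      linarith [h2 ▸ hs]
    rw [hsetEq]
    exact (sin_zero_count ω ℓ δ hω hδ0 hδπ (n+1)
      (by push_cast; linarith) (by push_cast; linarith)).2
  · intro hE
    rw [hEval] at hE
    have hs : Real.sin (ρ - δ) < 0 := by
      nlinarith [mul_pos hR2 hsinδpos]
    have hδρ : ρ < δ := by
      by_contra h
      push_neg at h
      have h1 : 0 ≤ Real.sin (ρ - δ) :=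
        Real.sin_nonneg_of_nonneg_of_le_pi (by linarith) (by linarith)
      linarith
    rw [hsetEq]
    exact (sin_zero_count ω ℓ δ hω hδ0 hδπ n
      (by push_cast; linarith) (by push_cast; linarith)).2


set_option maxHeartbeats 1000000 in
theorem stmt_18 (β : ℝ) (hβ0 : 0 < β) (hβ1 : β < 1 / 2) (hβ3 : β ≠ 1 / 3) (n : ℕ)
    (ω : ℝ) (hω : ω ∈ Itilde β n) (hωne : ω ≠ ωstar n) :
    {t ∈ Set.Ico (0 : ℝ) (2 * L) | φ β ω t = 0}.ncard = 2 * n + 1 := by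
  simp only [Itilde, Set.mem_Ioo] at hω
  obtain ⟨hω1, hω2⟩ := hω
  have hπ := Real.pi_pos
  have hL : 0 < L := by
    rw [L]
    have : (0:ℝ) < Real.sqrt 3 := Real.sqrt_pos.mpr (by norm_num)
    positivity
  -- basics about c
  set c : ℝ := Real.cos (2 * π * β) with hcdef
  have hβπ0 : 0 < 2 * π * β := by positivity
  have hβππ : 2 * π * β < π := by nlinarith only [hβ1, hπ, hβ0]
  have hmem1 : 2 * π * β ∈ Set.Icc 0 π := ⟨le_of_lt hβπ0, le_of_lt hβππ⟩
  have hc1 : c < 1 := by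
    have h := Real.strictAntiOn_cos (Set.mem_Icc.mpr ⟨le_refl 0, le_of_lt hπ⟩) hmem1 hβπ0
    rw [Real.cos_zero] at h
    exact h
  have hcm1 : -1 < c := by
    have h := Real.strictAntiOn_cos hmem1 (Set.mem_Icc.mpr ⟨le_of_lt hπ, le_refl π⟩) hβππ
    rw [Real.cos_pi] at h
    exact h
  have hcne : c ≠ -(1/2) := by
    intro h
    apply hβ3
    have hm2 : 2 * π / 3 ∈ Set.Icc 0 π := by
      constructor
      · linarith only [hπ]
      · linarith only [hπ]
    have h23 : Real.cos (2 * π / 3) = -(1/2) := by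
      rw [show (2 * π / 3 : ℝ) = π - π/3 by ring, Real.cos_pi_sub, Real.cos_pi_div_three]
    have heq : 2 * π * β = 2 * π / 3 :=
      Real.injOn_cos hmem1 hm2 (by rw [← hcdef, h, h23])
    have h3 : π * (β - 1/3) = 0 := by linarith only [heq]
    rcases mul_eq_zero.mp h3 with h4 | h4
    · exact absurd h4 (ne_of_gt hπ)
    · linarith only [h4]
  -- q = √(2+2c)
  set q : ℝ := Real.sqrt (2 + 2 * c) with hqdef
  have h2c : (0:ℝ) < 2 + 2 * c := by linarith only [hcm1]
  have hq0 : 0 < q := Real.sqrt_pos.mpr h2c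
  have hq2 : q ^ 2 = 2 + 2 * c := Real.sq_sqrt (le_of_lt h2c)
  have hqlt2 : q < 2 := by nlinarith only [hq2, hq0, hc1]
  have hq1 : q ≠ 1 := by
    intro h
    apply hcne
    rw [h] at hq2
    norm_num at hq2
    linarith only [hq2]
  -- a(β) facts
  have hsqab : Real.sqrt (3 + 2 * c - 2 * q) = |q - 1| := by
    rw [show 3 + 2 * c - 2 * q = (q - 1)^2 by linear_combination -hq2]
    exact Real.sqrt_sq_eq_abs _
  have haval : aβ β = Real.arccos (|q - 1| / 3) := by
    rw [aβ, ← hcdef, ← hqdef, hsqab]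
  have habs0 : 0 < |q - 1| := abs_pos.mpr (sub_ne_zero.mpr hq1)
  have habs1 : |q - 1| < 1 := abs_sub_lt_iff.mpr ⟨by linarith only [hqlt2], by linarith only [hq0]⟩
  have hacos : Real.cos (aβ β) = |q - 1| / 3 := by
    rw [haval]
    exact Real.cos_arccos (by linarith only [habs0]) (by linarith only [habs1])
  have ha0 : 0 < aβ β := by
    rw [haval]; exact Real.arccos_pos.mpr (by linarith only [habs1])
  have haπ2 : aβ β < π / 2 := by
    rw [haval]; exact Real.arccos_lt_pi_div_two.mpr (by linarith only [habs0])
  -- interval facts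
  have hlo : n * π + aβ β < ω * L := by
    rw [← add_div, div_lt_iff₀ hL] at hω1
    linarith only [hω1]
  have hhi : ω * L < ((n:ℝ) + 1) * π - aβ β := by
    rw [div_sub_div_same, lt_div_iff₀ hL] at hω2
    linarith only [hω2]
  set ρ : ℝ := ω * L - n * π with hρdef
  have hρa : aβ β < ρ := by rw [hρdef]; linarith only [hlo]
  have hρb : ρ < π - aβ β := by rw [hρdef]; nlinarith only [hhi]
  have hρ0 : 0 < ρ := by linarith only [hρa, ha0]
  have hρπ : ρ < π := by linarith only [hρb, ha0]
  have hωL : ω * L = n * π + ρ := by rw [hρdef]; ring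
  have hωpos : 0 < ω := by
    have hn0 : (0:ℝ) ≤ (n:ℝ) * π := by positivity
    have hωL0 : 0 < ω * L := by linarith only [hn0, hρ0, hωL]
    by_contra h
    push_neg at h
    nlinarith only [h, hL, hωL0]
  -- decompositions of cos/sin at ωL
  have hcLrw : Real.cos (ω * L) = (-1)^n * Real.cos ρ := by
    rw [show ω * L = ρ + (n:ℝ) * π by linarith only [hωL], Real.cos_add_nat_mul_pi]
  have hsLrw : Real.sin (ω * L) = (-1)^n * Real.sin ρ := by
    have h : ω * L = ρ + ((n:ℤ):ℝ) * π := by push_cast; linarith only [hωL]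
    rw [h, Real.sin_add_int_mul_pi]
    norm_num
  have hp2 : ((-1:ℝ)^n)^2 = 1 := by
    rw [← pow_mul, mul_comm, pow_mul]; norm_num
  have hsinρ : 0 < Real.sin ρ := Real.sin_pos_of_pos_of_lt_pi hρ0 hρπ
  have hsLsq : Real.sin (ω * L)^2 = Real.sin ρ ^ 2 := by
    rw [hsLrw, mul_pow, hp2, one_mul]
  have hcLsq : Real.cos (ω * L)^2 = Real.cos ρ ^ 2 := by
    rw [hcLrw, mul_pow, hp2, one_mul]
  have hsLne : Real.sin (ω * L) ≠ 0 := by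
    intro h0
    rw [h0] at hsLsq
    nlinarith only [hsLsq, hsinρ]
  -- bound on cos
  have hmemρ : ρ ∈ Set.Icc 0 π := ⟨le_of_lt hρ0, le_of_lt hρπ⟩
  have hmema : aβ β ∈ Set.Icc 0 π := ⟨le_of_lt ha0, by linarith only [haπ2, hπ]⟩
  have hub : Real.cos ρ < Real.cos (aβ β) := Real.strictAntiOn_cos hmema hmemρ hρa
  have hlb : -Real.cos (aβ β) < Real.cos ρ := by
    have hm : π - aβ β ∈ Set.Icc 0 π := ⟨by linarith only [haπ2, hπ], by linarith only [ha0]⟩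
    have h := Real.strictAntiOn_cos hmemρ hm hρb
    rw [Real.cos_pi_sub] at h
    linarith only [h]
  have h9 : 9 * Real.cos (ω * L)^2 < (q - 1)^2 := by
    rw [hcLsq]
    have h1 : Real.cos ρ ^ 2 < Real.cos (aβ β) ^ 2 := by nlinarith only [hub, hlb]
    have h2 : Real.cos (aβ β) ^ 2 = (q - 1)^2 / 9 := by
      rw [hacos, div_pow, sq_abs]
      norm_num
    linarith only [h1, h2]
  -- cos(ωL) ≠ 0
  have hcLne : Real.cos (ω * L) ≠ 0 := by
    intro h0
    have hcρ : Real.cos ρ = 0 := by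
      rw [h0] at hcLsq
      nlinarith only [hcLsq, sq_nonneg (Real.cos ρ)]
    obtain ⟨k, hk⟩ := Real.cos_eq_zero_iff.mp hcρ
    have hk0 : (0:ℝ) < 2 * (k:ℝ) + 1 := by nlinarith only [hk ▸ hρ0, hπ]
    have hk2 : 2 * (k:ℝ) + 1 < 2 := by nlinarith only [hk ▸ hρπ, hπ]
    have hk0' : (0:ℤ) < 2 * k + 1 := by exact_mod_cast hk0
    have hk2' : (2:ℤ) * k + 1 < 2 := by exact_mod_cast hk2
    have hkz : k = 0 := by omega
    rw [hkz] at hk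
    norm_num at hk
    apply hωne
    rw [ωstar, eq_div_iff (by positivity : 2 * L ≠ 0)]
    rw [hk] at hωL
    push_cast
    linear_combination 2 * hωL
  have hcL2pos : 0 < Real.cos (ω * L)^2 :=
    lt_of_le_of_ne (sq_nonneg _) (Ne.symm (pow_ne_zero 2 hcLne))
  have hsL2pos : 0 < Real.sin (ω * L)^2 :=
    lt_of_le_of_ne (sq_nonneg _) (Ne.symm (pow_ne_zero 2 hsLne))
  -- g < -2
  have hgq : g β ω * q = 9 * Real.cos (ω * L)^2 - q^2 - 1 := by
    rw [g, ← hcdef, ← hqdef, div_mul_cancel₀ _ (ne_of_gt hq0)]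
    linear_combination hq2
  have hg : g β ω < -2 := by
    have h1 : g β ω * q < -2 * q := by nlinarith only [hgq, h9]
    exact lt_of_mul_lt_mul_right (by linarith only [h1]) (le_of_lt hq0)
  -- r facts
  have hD : 0 < g β ω ^ 2 - 4 := by nlinarith only [hg]
  set sD : ℝ := Real.sqrt (g β ω ^ 2 - 4) with hsDdef
  have hsD0 : 0 ≤ sD := Real.sqrt_nonneg _
  have hsDsq : sD ^ 2 = g β ω ^ 2 - 4 := Real.sq_sqrt (le_of_lt hD)
  have hrdef : r β ω = (g β ω + sD) / 2 := by rw [r]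
  have hrneg : r β ω < 0 := by
    rw [hrdef]
    nlinarith only [hsDsq, hg, hsD0]
  have hrsq : r β ω ^ 2 - g β ω * r β ω + 1 = 0 := by
    rw [hrdef]
    linear_combination (1/4) * hsDsq
  have hu : u₀ β ω = 1 + r β ω * q := by rw [u₀, ← hcdef, ← hqdef]
  have hkey : u₀ β ω * (r β ω + q) = 9 * r β ω * Real.cos (ω * L)^2 := by
    rw [hu]
    linear_combination q * hrsq + r β ω * hgq
  have hprod : u₀ β ω * (r β ω + q) < 0 := by
    rw [hkey]
    nlinarith only [hrneg, hcL2pos]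
  have hune : u₀ β ω ≠ 0 := by
    intro h
    rw [h, zero_mul] at hprod
    exact lt_irrefl 0 hprod
  set Φ : ℝ := (9 * Real.cos (ω * L)^2 - u₀ β ω) / 2 with hΦdef
  have hΦrq : 2 * Φ * (r β ω + q) = 9 * q * Real.cos (ω * L)^2 := by
    rw [hΦdef]
    linear_combination -hkey
  have hΦpos : 0 < Φ * (r β ω + q) := by
    nlinarith only [hΦrq, mul_pos hq0 hcL2pos]
  have huΦ : u₀ β ω * Φ < 0 := by
    nlinarith only [mul_neg_of_neg_of_pos hprod hΦpos, sq_nonneg (r β ω + q)]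
  -- piece endpoint values
  have hf1L : 3 * Real.cos (ω * L) * Real.cos (ω * L) +
      -(v₀' β ω / (2 * ω)) * Real.sin (ω * L) = Φ := by
    rw [hΦdef, v₀', v₀]
    field_simp
    ring
  have hf2L : 3 * Real.cos (ω * L) * Real.sin (ω * L) * Real.cos (ω * L) +
      (u₀ β ω - 3 * Real.cos (ω * L)^2) * Real.sin (ω * L)
      = u₀ β ω * Real.sin (ω * L) := by ring
  -- zero counts of the two sinusoids
  obtain ⟨hfin1, hcnt1a, hcnt1b⟩ := sinusoid_count ω L (3 * Real.cos (ω * L))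
    (-(v₀' β ω / (2 * ω))) n ρ hωpos hρ0 hρπ hωL (mul_ne_zero three_ne_zero hcLne)
  obtain ⟨hfin2, hcnt2a, hcnt2b⟩ := sinusoid_count ω L
    (3 * Real.cos (ω * L) * Real.sin (ω * L)) (u₀ β ω - 3 * Real.cos (ω * L)^2)
    n ρ hωpos hρ0 hρπ hωL (mul_ne_zero (mul_ne_zero three_ne_zero hcLne) hsLne)
  rw [hf1L] at hcnt1a hcnt1b
  rw [hf2L] at hcnt2a hcnt2b
  -- product of the two endpoint sign quantities is negative
  have hq2n : ((-1:ℝ)^(n+1))^2 = 1 := by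
    rw [← pow_mul, mul_comm, pow_mul]; norm_num
  have he12 : ((-1:ℝ)^(n+1) * (3 * Real.cos (ω * L) * Φ)) *
      ((-1:ℝ)^(n+1) * (3 * Real.cos (ω * L) * Real.sin (ω * L) * (u₀ β ω * Real.sin (ω * L))))
      = 9 * Real.cos (ω * L)^2 * Real.sin (ω * L)^2 * (u₀ β ω * Φ) := by
    linear_combination (9 * Real.cos (ω * L)^2 * Real.sin (ω * L)^2 * (u₀ β ω * Φ)) * hq2n
  have hE : ((-1:ℝ)^(n+1) * (3 * Real.cos (ω * L) * Φ)) *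
      ((-1:ℝ)^(n+1) * (3 * Real.cos (ω * L) * Real.sin (ω * L) * (u₀ β ω * Real.sin (ω * L)))) < 0 := by
    rw [he12]
    nlinarith only [huΦ, mul_pos hcL2pos hsL2pos]
  -- set decomposition
  have hZ : {t ∈ Set.Ico (0:ℝ) (2 * L) | φ β ω t = 0}
      = ((fun y => L - y) '' {y ∈ Set.Ioc 0 L |
          3 * Real.cos (ω * L) * Real.cos (ω * y) + -(v₀' β ω / (2 * ω)) * Real.sin (ω * y) = 0})
        ∪ ((fun x => x + L) '' {x ∈ Set.Ioc 0 L |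
          3 * Real.cos (ω * L) * Real.sin (ω * L) * Real.cos (ω * x) +
            (u₀ β ω - 3 * Real.cos (ω * L)^2) * Real.sin (ω * x) = 0}) := by
    ext t
    simp only [Set.mem_union, Set.mem_image, Set.mem_setOf_eq, Set.mem_Ico, Set.mem_Ioc]
    constructor
    · rintro ⟨⟨ht0, ht2⟩, hφt⟩
      by_cases ht : t ≤ L
      · left
        rw [φ, if_pos ht, v₀] at hφt
        have htL : t < L := by
          rcases eq_or_lt_of_le ht with h | h
          · exfalso
            rw [h, sub_self, mul_zero, Real.cos_zero, Real.sin_zero] at hφt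
            simp only [mul_one, mul_zero, sub_zero] at hφt
            have : Real.cos (ω * L) = 0 := by linarith only [hφt]
            exact hcLne this
          · exact h
        refine ⟨L - t, ⟨⟨by linarith only [htL], by linarith only [ht0]⟩, ?_⟩, by ring⟩
        linear_combination hφt
      · right
        push_neg at ht
        rw [φ, if_neg (not_le.mpr ht)] at hφt
        have hinner : v₀ ω * Real.sin (ω * (2 * L - t)) + u₀ β ω * Real.sin (ω * (t - L)) = 0 := by
          rcases mul_eq_zero.mp hφt with h | h
          · exact absurd h (one_div_ne_zero hsLne)
          · exact h
        refine ⟨t - L, ⟨⟨by linarith only [ht], by linarith only [ht2]⟩, ?_⟩, by ring⟩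
        rw [v₀, show ω * (2 * L - t) = ω * L - ω * (t - L) by ring, Real.sin_sub] at hinner
        linear_combination hinner
    · rintro (⟨y, ⟨⟨hy0, hyL⟩, hval⟩, rfl⟩ | ⟨x, ⟨⟨hx0, hxL⟩, hval⟩, rfl⟩)
      · refine ⟨⟨by linarith only [hyL], by linarith only [hy0, hL]⟩, ?_⟩
        rw [φ, if_pos (by linarith only [hy0] : L - y ≤ L), v₀,
          show L - (L - y) = y by ring]
        linear_combination hval
      · have hxL' : x < L := by
          rcases eq_or_lt_of_le hxL with h | h
          · exfalso
            rw [h, hf2L] at hval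
            exact (mul_ne_zero hune hsLne) hval
          · exact h
        refine ⟨⟨by linarith only [hx0, hL], by linarith only [hxL']⟩, ?_⟩
        rw [φ, if_neg (by push_neg; linarith only [hx0] : ¬ (x + L ≤ L)), v₀,
          show 2 * L - (x + L) = L - x by ring,
          show x + L - L = x by ring,
          show ω * (L - x) = ω * L - ω * x by ring, Real.sin_sub]
        have h5 : 3 * Real.cos (ω * L) *
            (Real.sin (ω * L) * Real.cos (ω * x) - Real.cos (ω * L) * Real.sin (ω * x)) +
            u₀ β ω * Real.sin (ω * x) = 0 := by linear_combination hval
        rw [h5, mul_zero]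
  -- injectivity and disjointness
  have hinj1 : Function.Injective (fun y : ℝ => L - y) := by
    intro a b h
    simp only at h
    linarith only [h]
  have hinj2 : Function.Injective (fun x : ℝ => x + L) := fun a b h => by
    simp only at h; linarith only [h]
  have hdisj : Disjoint
      ((fun y => L - y) '' {y ∈ Set.Ioc 0 L |
          3 * Real.cos (ω * L) * Real.cos (ω * y) + -(v₀' β ω / (2 * ω)) * Real.sin (ω * y) = 0})
      ((fun x => x + L) '' {x ∈ Set.Ioc 0 L |
          3 * Real.cos (ω * L) * Real.sin (ω * L) * Real.cos (ω * x) +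
            (u₀ β ω - 3 * Real.cos (ω * L)^2) * Real.sin (ω * x) = 0}) := by
    rw [Set.disjoint_left]
    rintro a ⟨y, ⟨⟨hy0, _⟩, _⟩, rfl⟩ ⟨x, ⟨⟨hx0, _⟩, _⟩, hax⟩
    simp only at hax
    linarith only [hy0, hx0, hax]
  rw [hZ, Set.ncard_union_eq hdisj (hfin1.image _) (hfin2.image _),
    Set.ncard_image_of_injective _ hinj1, Set.ncard_image_of_injective _ hinj2]
  -- case split on the sign
  rcases lt_trichotomy ((-1:ℝ)^(n+1) *
      (3 * Real.cos (ω * L) * Real.sin (ω * L) * (u₀ β ω * Real.sin (ω * L)))) 0 with h2 | h2 | h2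
  · have h1 : 0 < (-1:ℝ)^(n+1) * (3 * Real.cos (ω * L) * Φ) := by
      rcases lt_trichotomy ((-1:ℝ)^(n+1) * (3 * Real.cos (ω * L) * Φ)) 0 with h | h | h
      · exfalso; nlinarith only [hE, h, h2]
      · exfalso; rw [h, zero_mul] at hE; exact lt_irrefl 0 hE
      · exact h
    rw [hcnt1a h1, hcnt2b h2]
    omega
  · exfalso; rw [h2, mul_zero] at hE; exact lt_irrefl 0 hE
  · have h1 : (-1:ℝ)^(n+1) * (3 * Real.cos (ω * L) * Φ) < 0 := by
      rcases lt_trichotomy ((-1:ℝ)^(n+1) * (3 * Real.cos (ω * L) * Φ)) 0 with h | h | h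
      · exact h
      · exfalso; rw [h, zero_mul] at hE; exact lt_irrefl 0 hE
      · exfalso; nlinarith only [hE, h, h2]
    rw [hcnt1b h1, hcnt2a h2]
    omega
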